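/- Let r ≥ 1 and let G₁ be a group. Let G be the free product of the constant family of groups Gᵢ = G₁ indexed by ℤ/rℤ, with canonical inclusions ιᵢ : G₁ → G, and let f be an automorphism of G such that f(ιᵢ(G₁)) = ι_{i+1}(G₁) for all i ∈ ℤ/rℤ, so that f^r maps ι₀(G₁) onto itself and induces an automorphism φ of G₁ with f^r(ι₀(g)) = ι₀(φ(g)) for all g ∈ G₁. Then the semidirect product G ⋊_f ℤ, where the generator of ℤ acts on G by f, is isomorphic to the group presented on the generating set G₁ ⊔ {t} (one generator for each element of G₁, plus one extra generator t) with relators the words g·h·(g·h)⁻¹ for all g, h ∈ G₁ (the multiplication table of G₁) together with the words t^r·g·t^{−r}·(φ(g))⁻¹ for all g ∈ G₁. -/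

import Mathlib

noncomputable section Stmt3Proof

open Monoid Multiplicative

variable {r : ℕ} {G₁ : Type*} [Group G₁]

private abbrev GG (r : ℕ) (G₁ : Type*) [Group G₁] := Monoid.CoprodI (fun _ : ZMod r => G₁)

private abbrev ι {r : ℕ} {G₁ : Type*} [Group G₁] (i : ZMod r) : G₁ →* GG r G₁ :=
  Monoid.CoprodI.of (M := fun _ : ZMod r => G₁) (i := i)

private theorem ι_inj (i : ZMod r) : Function.Injective (ι (r := r) (G₁ := G₁) i) :=
  Monoid.CoprodI.of_injective i

variable (f : MulAut (GG r G₁))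

private theorem map_pow_range
    (hf : ∀ i : ZMod r, Subgroup.map f.toMonoidHom (ι i).range = (ι (i + 1)).range)
    (k : ℕ) :
    Subgroup.map ((f ^ k : MulAut (GG r G₁)).toMonoidHom) (ι (0 : ZMod r)).range
      = (ι ((k : ZMod r))).range := by
  induction k with
  | zero =>
      rw [pow_zero, Nat.cast_zero]
      exact Subgroup.map_id _
  | succ k ih =>
      have h1 : ((f ^ (k+1) : MulAut (GG r G₁)).toMonoidHom)
          = f.toMonoidHom.comp (f ^ k : MulAut (GG r G₁)).toMonoidHom := by
        rw [pow_succ']; rfl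
      rw [h1, ← Subgroup.map_map, ih, hf]
      push_cast
      ring_nf

private theorem mem_pow
    (hf : ∀ i : ZMod r, Subgroup.map f.toMonoidHom (ι i).range = (ι (i + 1)).range)
    (k : ℕ) (g : G₁) : (f ^ k) (ι (0 : ZMod r) g) ∈ (ι ((k : ZMod r))).range := by
  rw [← map_pow_range f hf k]
  exact ⟨ι (0 : ZMod r) g, ⟨g, rfl⟩, rfl⟩

variable (hf : ∀ i : ZMod r, Subgroup.map f.toMonoidHom (ι i).range = (ι (i + 1)).range)

private def θ (k : ℕ) (g : G₁) : G₁ := (mem_pow f hf k g).choose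

private theorem hθ (k : ℕ) (g : G₁) :
    ι ((k : ZMod r)) (θ f hf k g) = (f ^ k) (ι (0 : ZMod r) g) :=
  (mem_pow f hf k g).choose_spec

private theorem θ_inj (k : ℕ) : Function.Injective (θ f hf k) := by
  intro a b hab
  have h1 := hθ f hf k a
  have h2 := hθ f hf k b
  rw [hab, h2] at h1
  exact (ι_inj (0 : ZMod r) ((f ^ k).injective h1)).symm

private theorem θ_surj (k : ℕ) : Function.Surjective (θ f hf k) := by
  intro h
  have hmem : ι ((k : ZMod r)) h ∈ (ι ((k : ZMod r))).range := ⟨h, rfl⟩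
  rw [← map_pow_range f hf k] at hmem
  obtain ⟨x, ⟨g, rfl⟩, hx⟩ := hmem
  refine ⟨g, ι_inj ((k : ZMod r)) ?_⟩
  rw [hθ f hf k g]
  exact hx

private theorem θ_mul (k : ℕ) (a b : G₁) :
    θ f hf k (a * b) = θ f hf k a * θ f hf k b := by
  apply ι_inj ((k : ZMod r))
  rw [map_mul, hθ, hθ, hθ, ← map_mul, ← map_mul]

private theorem θ_zero (g : G₁) : θ f hf 0 g = g := by
  apply ι_inj (((0 : ℕ) : ZMod r))
  rw [hθ]
  simp

private theorem θ_r (φ : MulAut G₁)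
    (hφ : ∀ g : G₁, (f ^ r) (ι (0 : ZMod r) g) = ι (0 : ZMod r) (φ g))
    (g : G₁) : θ f hf r g = φ g := by
  apply ι_inj ((r : ZMod r))
  rw [hθ, hφ]
  norm_num [ZMod.natCast_self]

private def θe (k : ℕ) : G₁ ≃ G₁ := Equiv.ofBijective (θ f hf k) ⟨θ_inj f hf k, θ_surj f hf k⟩

private theorem θe_symm_θ (k : ℕ) (g : G₁) : (θe f hf k).symm (θ f hf k g) = g :=
  (θe f hf k).symm_apply_apply g

private theorem θ_θe_symm (k : ℕ) (g : G₁) : θ f hf k ((θe f hf k).symm g) = g :=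
  (θe f hf k).apply_symm_apply g

private theorem θe_symm_mul (k : ℕ) (a b : G₁) :
    (θe f hf k).symm (a * b) = (θe f hf k).symm a * (θe f hf k).symm b := by
  apply θ_inj f hf k
  rw [θ_mul, θ_θe_symm, θ_θe_symm, θ_θe_symm]

private abbrev rels (r : ℕ) (G₁ : Type*) [Group G₁] (φ : MulAut G₁) :
    Set (FreeGroup (G₁ ⊕ Unit)) :=
  {w : FreeGroup (G₁ ⊕ Unit) |
    (∃ g h : G₁, w = FreeGroup.of (Sum.inl g) * FreeGroup.of (Sum.inl h) *
        (FreeGroup.of (Sum.inl (g * h)))⁻¹) ∨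
    (∃ g : G₁, w = FreeGroup.of (Sum.inr ()) ^ r * FreeGroup.of (Sum.inl g) *
        (FreeGroup.of (Sum.inr ()) ^ r)⁻¹ * (FreeGroup.of (Sum.inl (φ g)))⁻¹)}

variable (φ : MulAut G₁)

private theorem mk_rel_one {w : FreeGroup (G₁ ⊕ Unit)} (hw : w ∈ rels r G₁ φ) :
    PresentedGroup.mk (rels r G₁ φ) w = 1 :=
  (QuotientGroup.eq_one_iff w).2 (Subgroup.subset_normalClosure hw)

private def βP : G₁ →* PresentedGroup (rels r G₁ φ) :=
  MonoidHom.mk' (fun g => PresentedGroup.of (Sum.inl g)) (by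
    intro a b
    have h := mk_rel_one (r := r) (φ := φ) (Or.inl ⟨a, b, rfl⟩)
    rw [map_mul, map_mul, map_inv, mul_inv_eq_one] at h
    exact h.symm)

private def τ : PresentedGroup (rels r G₁ φ) := PresentedGroup.of (Sum.inr ())

private theorem rel2 (g : G₁) :
    τ (r := r) φ ^ r * βP φ g * (τ (r := r) φ ^ r)⁻¹ = βP φ (φ g) := by
  have h := mk_rel_one (r := r) (φ := φ) (Or.inr ⟨g, rfl⟩)
  rw [map_mul, map_mul, map_mul, map_inv, map_inv, map_pow, mul_inv_eq_one] at h
  exact h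

private def κ (i : ZMod r) : G₁ →* PresentedGroup (rels r G₁ φ) :=
  MonoidHom.mk'
    (fun g => τ (r := r) φ ^ i.val * βP φ ((θe f hf i.val).symm g) * (τ (r := r) φ ^ i.val)⁻¹)
    (by
      intro a b
      rw [θe_symm_mul, map_mul]
      group)

private def ΨG : GG r G₁ →* PresentedGroup (rels r G₁ φ) :=
  Monoid.CoprodI.lift (fun i => κ f hf φ i)

private theorem ΨG_of (i : ZMod r) (g : G₁) :
    ΨG f hf φ (ι i g) = τ (r := r) φ ^ i.val * βP φ ((θe f hf i.val).symm g) *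
      (τ (r := r) φ ^ i.val)⁻¹ :=
  Monoid.CoprodI.lift_of _ _

private theorem key1 [NeZero r]
    (hφ : ∀ g : G₁, (f ^ r) (ι (0 : ZMod r) g) = ι (0 : ZMod r) (φ g))
    (x : GG r G₁) :
    ΨG f hf φ (f x) = τ (r := r) φ * ΨG f hf φ x * (τ (r := r) φ)⁻¹ := by
  induction x using Monoid.CoprodI.induction_on with
  | one => simp
  | mul x y hx hy => rw [map_mul, map_mul, hx, hy, map_mul]; group
  | of i g =>
    set v := i.val with hv
    set g' := (θe f hf v).symm g with hg'
    have hig : ι i g = (f ^ v) (ι (0 : ZMod r) g') := by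
      have h1 : ((v : ZMod r)) = i := by
        simp [hv, ZMod.natCast_val, ZMod.cast_id]
      rw [← hθ f hf v g', θ_θe_symm, h1]
    have hfig : f (ι i g) = ι ((v + 1 : ℕ) : ZMod r) (θ f hf (v + 1) g') := by
      rw [hig, hθ f hf (v+1) g', pow_succ']
      rfl
    rw [hfig, ΨG_of, ΨG_of, ← hg']
    have hvlt : v < r := ZMod.val_lt i
    rcases lt_or_eq_of_le (Nat.succ_le_of_lt hvlt) with hlt | heq
    · have h2 : ((v + 1 : ℕ) : ZMod r).val = v + 1 := ZMod.val_cast_of_lt hlt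
      rw [h2, θe_symm_θ, ← hv]
      group
    · have heq' : v + 1 = r := heq
      have h2 : ((v + 1 : ℕ) : ZMod r) = 0 := by rw [heq']; exact ZMod.natCast_self r
      rw [h2, ZMod.val_zero, pow_zero]
      have h3 : (θe f hf 0).symm (θ f hf (v+1) g') = θ f hf (v+1) g' := by
        apply θ_inj f hf 0
        rw [θ_θe_symm, θ_zero]
      rw [h3, heq', θ_r f hf φ hφ g', ← rel2]
      have h6 : τ (r := r) φ ^ r = τ (r := r) φ ^ (v + 1) := congrArg _ heq'.symm
      rw [h6, ← hv]
      group

private theorem keyz [NeZero r]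
    (hφ : ∀ g : G₁, (f ^ r) (ι (0 : ZMod r) g) = ι (0 : ZMod r) (φ g))
    (z : ℤ) (x : GG r G₁) :
    ΨG f hf φ ((f ^ z) x) = τ (r := r) φ ^ z * ΨG f hf φ x * (τ (r := r) φ ^ z)⁻¹ := by
  induction z using Int.induction_on generalizing x with
  | zero => simp
  | succ k ih =>
      have h1 : (f ^ ((k : ℤ) + 1)) x = (f ^ (k : ℤ)) (f x) := by
        rw [zpow_add_one]; rfl
      rw [h1, ih (f x), key1 f hf φ hφ x]
      group
  | pred k ih =>
      have h1 : (f ^ (-(k : ℤ) - 1)) x = (f ^ (-(k : ℤ))) (f⁻¹ x) := by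
        rw [zpow_sub_one]; rfl
      have h2 : ΨG f hf φ (f⁻¹ x) = (τ (r := r) φ)⁻¹ * ΨG f hf φ x * τ (r := r) φ := by
        have h3 := key1 f hf φ hφ (f⁻¹ x)
        have h4 : f (f⁻¹ x) = x := by
          simp
        rw [h4] at h3
        rw [h3]
        group
      rw [h1, ih (f⁻¹ x), h2]
      group

private def Ψ [NeZero r]
    (hφ : ∀ g : G₁, (f ^ r) (ι (0 : ZMod r) g) = ι (0 : ZMod r) (φ g)) :
    (GG r G₁ ⋊[zpowersHom (MulAut (GG r G₁)) f] Multiplicative ℤ)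
      →* PresentedGroup (rels r G₁ φ) :=
  SemidirectProduct.lift (ΨG f hf φ)
    (zpowersHom (PresentedGroup (rels r G₁ φ)) (τ (r := r) φ))
    (by
      intro g
      refine MonoidHom.ext fun x => ?_
      simp only [MonoidHom.comp_apply, MulEquiv.coe_toMonoidHom, zpowersHom_apply,
        MulAut.conj_apply]
      rw [keyz f hf φ hφ (toAdd g) x])

private def Φfun :
    G₁ ⊕ Unit → (GG r G₁ ⋊[zpowersHom (MulAut (GG r G₁)) f] Multiplicative ℤ) :=
  Sum.elim (fun g => SemidirectProduct.inl (ι (0 : ZMod r) g))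
    (fun _ => SemidirectProduct.inr (ofAdd 1))

private theorem inr_inl_conj (z : Multiplicative ℤ) (n : GG r G₁) :
    (SemidirectProduct.inr z : GG r G₁ ⋊[zpowersHom (MulAut (GG r G₁)) f] Multiplicative ℤ)
        * SemidirectProduct.inl n * (SemidirectProduct.inr z)⁻¹
      = SemidirectProduct.inl ((f ^ toAdd z) n) := by
  rw [← map_inv]
  exact (SemidirectProduct.inl_aut z n).symm

private theorem hΦrels
    (hφ : ∀ g : G₁, (f ^ r) (ι (0 : ZMod r) g) = ι (0 : ZMod r) (φ g)) :
    ∀ w ∈ rels r G₁ φ, FreeGroup.lift (Φfun f) w = 1 := by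
  rintro w (⟨g, h, rfl⟩ | ⟨g, rfl⟩)
  · simp only [map_mul, map_inv, FreeGroup.lift_apply_of, Φfun, Sum.elim_inl]
    rw [← map_mul, ← map_mul, mul_inv_eq_one]
  · simp only [map_mul, map_inv, map_pow, FreeGroup.lift_apply_of, Φfun, Sum.elim_inl, Sum.elim_inr]
    rw [← map_pow, mul_assoc (SemidirectProduct.inr (ofAdd 1 ^ r)) _ _]
    rw [show (SemidirectProduct.inr (ofAdd (1:ℤ) ^ r) : GG r G₁ ⋊[zpowersHom (MulAut (GG r G₁)) f] Multiplicative ℤ) * (SemidirectProduct.inl (ι (0 : ZMod r) g) * (SemidirectProduct.inr (ofAdd (1:ℤ) ^ r))⁻¹) = SemidirectProduct.inl ((f ^ toAdd (ofAdd (1:ℤ) ^ r)) (ι (0 : ZMod r) g)) from by rw [← mul_assoc]; exact inr_inl_conj f _ _]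
    have h5 : toAdd (ofAdd (1 : ℤ) ^ r) = (r : ℤ) := by simp
    rw [h5, zpow_natCast, hφ, mul_inv_cancel]

private def Φ (hφ : ∀ g : G₁, (f ^ r) (ι (0 : ZMod r) g) = ι (0 : ZMod r) (φ g)) :
    PresentedGroup (rels r G₁ φ)
      →* (GG r G₁ ⋊[zpowersHom (MulAut (GG r G₁)) f] Multiplicative ℤ) :=
  PresentedGroup.toGroup (hΦrels f φ hφ)

private theorem Φκ [NeZero r]
    (hφ : ∀ g : G₁, (f ^ r) (ι (0 : ZMod r) g) = ι (0 : ZMod r) (φ g))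
    (i : ZMod r) (g : G₁) :
    Φ f φ hφ (κ f hf φ i g) = SemidirectProduct.inl (ι i g) := by
  have hτ : Φ f φ hφ (τ (r := r) φ) = SemidirectProduct.inr (ofAdd 1) :=
    PresentedGroup.toGroup.of _
  have hβ : ∀ a : G₁, Φ f φ hφ (βP φ a) = SemidirectProduct.inl (ι (0 : ZMod r) a) :=
    fun a => PresentedGroup.toGroup.of _
  have h0 : κ f hf φ i g = τ (r := r) φ ^ i.val * βP φ ((θe f hf i.val).symm g) *
      (τ (r := r) φ ^ i.val)⁻¹ := rfl
  rw [h0, map_mul, map_mul, map_inv, map_pow, hτ, hβ, ← map_pow, inr_inl_conj]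
  have h5 : toAdd (ofAdd (1 : ℤ) ^ i.val) = (i.val : ℤ) := by simp
  rw [h5, zpow_natCast]
  have hcast : ((i.val : ℕ) : ZMod r) = i := by simp [ZMod.natCast_val, ZMod.cast_id]
  have h6 := hθ f hf i.val ((θe f hf i.val).symm g)
  rw [θ_θe_symm, hcast] at h6
  rw [← h6]

private theorem ΦΨ [NeZero r]
    (hφ : ∀ g : G₁, (f ^ r) (ι (0 : ZMod r) g) = ι (0 : ZMod r) (φ g)) :
    (Φ f φ hφ).comp (Ψ f hf φ hφ) = MonoidHom.id _ := by
  apply SemidirectProduct.hom_ext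
  · apply Monoid.CoprodI.ext_hom
    intro i
    refine MonoidHom.ext fun g => ?_
    show Φ f φ hφ (Ψ f hf φ hφ (SemidirectProduct.inl (ι i g))) = SemidirectProduct.inl (ι i g)
    rw [show Ψ f hf φ hφ (SemidirectProduct.inl (ι i g)) = ΨG f hf φ (ι i g) from
      SemidirectProduct.lift_inl _ _ _ _]
    rw [show ΨG f hf φ (ι i g) = κ f hf φ i g from Monoid.CoprodI.lift_of _ _]
    exact Φκ f hf φ hφ i g
  · refine MonoidHom.ext_mint ?_
    show Φ f φ hφ (Ψ f hf φ hφ (SemidirectProduct.inr (ofAdd 1)))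
      = SemidirectProduct.inr (ofAdd 1)
    rw [show Ψ f hf φ hφ (SemidirectProduct.inr (ofAdd 1))
        = zpowersHom (PresentedGroup (rels r G₁ φ)) (τ (r := r) φ) (ofAdd 1) from
      SemidirectProduct.lift_inr _ _ _ _]
    rw [zpowersHom_apply]
    simp only [toAdd_ofAdd, zpow_one]
    exact PresentedGroup.toGroup.of _

private theorem ΨΦ [NeZero r]
    (hφ : ∀ g : G₁, (f ^ r) (ι (0 : ZMod r) g) = ι (0 : ZMod r) (φ g)) :
    (Ψ f hf φ hφ).comp (Φ f φ hφ) = MonoidHom.id _ := by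
  refine PresentedGroup.ext fun x => ?_
  cases x with
  | inl g =>
    show Ψ f hf φ hφ (Φ f φ hφ (PresentedGroup.of (Sum.inl g)))
      = PresentedGroup.of (Sum.inl g)
    rw [show Φ f φ hφ (PresentedGroup.of (Sum.inl g))
        = SemidirectProduct.inl (ι (0 : ZMod r) g) from PresentedGroup.toGroup.of _]
    rw [show Ψ f hf φ hφ (SemidirectProduct.inl (ι (0 : ZMod r) g))
        = ΨG f hf φ (ι (0 : ZMod r) g) from SemidirectProduct.lift_inl _ _ _ _]
    rw [ΨG_of, ZMod.val_zero, pow_zero]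
    have h3 : (θe f hf 0).symm g = g := by
      apply θ_inj f hf 0
      rw [θ_θe_symm, θ_zero]
    rw [h3, one_mul, inv_one, mul_one]
    rfl
  | inr u =>
    cases u
    show Ψ f hf φ hφ (Φ f φ hφ (PresentedGroup.of (Sum.inr ())))
      = PresentedGroup.of (Sum.inr ())
    rw [show Φ f φ hφ (PresentedGroup.of (Sum.inr ()))
        = SemidirectProduct.inr (ofAdd 1) from PresentedGroup.toGroup.of _]
    rw [show Ψ f hf φ hφ (SemidirectProduct.inr (ofAdd 1))
        = zpowersHom (PresentedGroup (rels r G₁ φ)) (τ (r := r) φ) (ofAdd 1) from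
      SemidirectProduct.lift_inr _ _ _ _]
    rw [zpowersHom_apply]
    simp only [toAdd_ofAdd, zpow_one]
    rfl

end Stmt3Proof

/-- With the same setup as Statement 0, the semidirect product `G ⋊_f ℤ` (the
generator of `ℤ` acting by `f`) is isomorphic to the group presented on the generating set
`G₁ ⊕ Unit` (a generator for each element of `G₁`, plus one extra generator `t = Sum.inr ()`)
with relators the multiplication-table words `g·h·(g·h)⁻¹` for `g, h ∈ G₁` together with the
words `t^r·g·t^{-r}·(φ g)⁻¹` for `g ∈ G₁`. -/
theorem stmt_3 (r : ℕ) (hr : 1 ≤ r) (G₁ : Type*) [Group G₁]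
    (f : MulAut (Monoid.CoprodI (fun _ : ZMod r => G₁)))
    (hf : ∀ i : ZMod r,
      Subgroup.map f.toMonoidHom
        (MonoidHom.range (Monoid.CoprodI.of (M := fun _ : ZMod r => G₁) (i := i))) =
      MonoidHom.range (Monoid.CoprodI.of (M := fun _ : ZMod r => G₁) (i := i + 1)))
    (φ : MulAut G₁)
    (hφ : ∀ g : G₁,
      (f ^ r) (Monoid.CoprodI.of (M := fun _ : ZMod r => G₁) (i := (0 : ZMod r)) g) =
        Monoid.CoprodI.of (M := fun _ : ZMod r => G₁) (i := (0 : ZMod r)) (φ g)) :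
    Nonempty (
      (Monoid.CoprodI (fun _ : ZMod r => G₁)
          ⋊[zpowersHom (MulAut (Monoid.CoprodI (fun _ : ZMod r => G₁))) f] Multiplicative ℤ)
      ≃* PresentedGroup
          {w : FreeGroup (G₁ ⊕ Unit) |
            (∃ g h : G₁, w = FreeGroup.of (Sum.inl g) * FreeGroup.of (Sum.inl h) *
                (FreeGroup.of (Sum.inl (g * h)))⁻¹) ∨
            (∃ g : G₁, w = FreeGroup.of (Sum.inr ()) ^ r * FreeGroup.of (Sum.inl g) *
                (FreeGroup.of (Sum.inr ()) ^ r)⁻¹ * (FreeGroup.of (Sum.inl (φ g)))⁻¹)}) := by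
  haveI : NeZero r := ⟨by omega⟩
  exact ⟨MonoidHom.toMulEquiv (Ψ f hf φ hφ) (Φ f φ hφ) (ΦΨ f hf φ hφ) (ΨΦ f hf φ hφ)⟩
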